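/- Let P_{XY|AB} be a conditional distribution with binary outputs X, Y ∈ {0,1}, inputs A ∈ {0,2,...,2N−2}, B ∈ {1,3,...,2N−1}, and define I_N := P(X=Y | A=0, B=2N−1) + ∑_{|a−b|=1} P(X≠Y | A=a, B=b). Suppose P_{XYZ|ABC} is a non-signalling extension, meaning P_{XY|ABC}=P_{XY|AB}, P_{XZ|ABC}=P_{XZ|AC}, and P_{YZ|ABC}=P_{YZ|BC}. Then for all a, b, c, z, the conditional distribution of X satisfies |P_{X|abcz}(x) − 1/2| ≤ (1/2) I_N(P_{XY|AB,cz}), where P_{XY|AB,cz} denotes conditioning additionally on C=c, Z=z. -/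

import Mathlib

open Finset

/-- The chained Bell quantity `I_N` for a conditional distribution `Q` of binary outcomes
`(X,Y)` given settings `(A,B)`.  The settings `A ∈ {0,2,…,2N}` are indexed by
`a : Fin (N+1)` (setting `2a`) and `B ∈ {1,3,…,2N+1}` by `b : Fin (N+1)` (setting `2b+1`);
`|A − B| = 1` holds exactly for the pairs `(a, b) = (i, i)` and `(a, b) = (i+1, i)`.
`I_N := P(X=Y | A=0, B=2N+1) + ∑_{|A−B|=1} P(X≠Y | A, B)`. -/
noncomputable def chainedBell {N : ℕ} (Q : Fin (N + 1) → Fin (N + 1) → Fin 2 → Fin 2 → ℝ) :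
    ℝ :=
  (∑ x, Q 0 (Fin.last N) x x)
    + ∑ i : Fin (N + 1), ∑ x, ∑ y, (if x ≠ y then Q i i x y else 0)
    + ∑ i : Fin N, ∑ x, ∑ y, (if x ≠ y then Q i.succ i.castSucc x y else 0)

/-- index helper : `finIdx N k = min k N` as an element of `Fin (N+1)`. -/
def finIdx (N k : ℕ) : Fin (N + 1) := ⟨min k N, by omega⟩

/-- extend `e : Fin N → ℝ` to `ℕ` by zero. -/
noncomputable def eb {N : ℕ} (e : Fin N → ℝ) (k : ℕ) : ℝ :=
  if h : k < N then e ⟨k, h⟩ else 0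

lemma finIdx_of_fin {N : ℕ} (i : Fin (N + 1)) : finIdx N i.val = i := by
  have := i.isLt
  ext; simp [finIdx]; omega

lemma finIdx_zero {N : ℕ} : finIdx N 0 = 0 := by ext; simp [finIdx]

lemma finIdx_succ {N k : ℕ} (h : k < N) : finIdx N (k + 1) = Fin.succ ⟨k, h⟩ := by
  ext; simp [finIdx]; omega

lemma finIdx_cast {N k : ℕ} (h : k < N) : finIdx N k = Fin.castSucc ⟨k, h⟩ := by
  ext; simp [finIdx]; omega

lemma eb_of_lt {N : ℕ} (e : Fin N → ℝ) {k : ℕ} (h : k < N) : eb e k = e ⟨k, h⟩ := dif_pos h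

lemma chain_bound {N : ℕ} (u v : Fin (N + 1) → ℝ) (d : Fin (N + 1) → ℝ)
    (e : Fin N → ℝ) (t : ℝ)
    (huv : ∀ i, |u i - v i| ≤ d i)
    (he : ∀ i : Fin N, |u i.succ - v i.castSucc| ≤ e i)
    (ht : |u 0 + v (Fin.last N) - 1| ≤ t) (a : Fin (N + 1)) :
    |u a - 1 / 2| ≤ 1 / 2 * (t + ((∑ i, d i) + ∑ i, e i)) := by
  classical
  -- P1 : forward chain from 0 to k
  have P1 : ∀ k, k ≤ N → |u (finIdx N k) - u (finIdx N 0)| ≤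
      ∑ j ∈ Finset.range k, (eb e j + d (finIdx N j)) := by
    intro k
    induction k with
    | zero => intro _; simp
    | succ n ih =>
      intro hn
      have hnN : n < N := hn
      have h1 := ih (Nat.le_of_lt hnN)
      have hstep : |u (finIdx N (n + 1)) - u (finIdx N n)| ≤ eb e n + d (finIdx N n) := by
        have ha : |u (finIdx N (n + 1)) - v (finIdx N n)| ≤ eb e n := by
          rw [finIdx_succ hnN, finIdx_cast hnN, eb_of_lt e hnN]
          exact he ⟨n, hnN⟩
        have hb := huv (finIdx N n)
        calc |u (finIdx N (n + 1)) - u (finIdx N n)|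
            ≤ |u (finIdx N (n + 1)) - v (finIdx N n)| + |v (finIdx N n) - u (finIdx N n)| :=
              abs_sub_le _ _ _
          _ = |u (finIdx N (n + 1)) - v (finIdx N n)| + |u (finIdx N n) - v (finIdx N n)| := by
              rw [abs_sub_comm (v (finIdx N n))]
          _ ≤ eb e n + d (finIdx N n) := add_le_add ha hb
      rw [Finset.sum_range_succ]
      calc |u (finIdx N (n + 1)) - u (finIdx N 0)|
          ≤ |u (finIdx N (n + 1)) - u (finIdx N n)| + |u (finIdx N n) - u (finIdx N 0)| :=
            abs_sub_le _ _ _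
        _ ≤ _ := by linarith
  -- P2 : chain from k to k + m on the v side
  have P2 : ∀ m k, k + m ≤ N → |v (finIdx N (k + m)) - v (finIdx N k)| ≤
      ∑ j ∈ Finset.range m, (eb e (k + j) + d (finIdx N (k + j + 1))) := by
    intro m
    induction m with
    | zero => intro k _; simp
    | succ n ih =>
      intro k h
      have h1 := ih k (by omega)
      have hkn : k + n < N := by omega
      have hstep : |v (finIdx N (k + n + 1)) - v (finIdx N (k + n))| ≤
          eb e (k + n) + d (finIdx N (k + n + 1)) := by
        have ha : |u (finIdx N (k + n + 1)) - v (finIdx N (k + n))| ≤ eb e (k + n) := by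
          rw [finIdx_succ hkn, finIdx_cast hkn, eb_of_lt e hkn]
          exact he ⟨k + n, hkn⟩
        have hb := huv (finIdx N (k + n + 1))
        calc |v (finIdx N (k + n + 1)) - v (finIdx N (k + n))|
            ≤ |v (finIdx N (k + n + 1)) - u (finIdx N (k + n + 1))|
              + |u (finIdx N (k + n + 1)) - v (finIdx N (k + n))| := abs_sub_le _ _ _
          _ = |u (finIdx N (k + n + 1)) - v (finIdx N (k + n + 1))|
              + |u (finIdx N (k + n + 1)) - v (finIdx N (k + n))| := by
              rw [abs_sub_comm (v (finIdx N (k + n + 1)))]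
          _ ≤ d (finIdx N (k + n + 1)) + eb e (k + n) := add_le_add hb ha
          _ = eb e (k + n) + d (finIdx N (k + n + 1)) := by ring
      rw [Finset.sum_range_succ, show k + (n + 1) = (k + n) + 1 from rfl]
      calc |v (finIdx N (k + n + 1)) - v (finIdx N k)|
          ≤ |v (finIdx N (k + n + 1)) - v (finIdx N (k + n))|
            + |v (finIdx N (k + n)) - v (finIdx N k)| := abs_sub_le _ _ _
        _ ≤ _ := by linarith
  -- assemble
  have hk : a.val ≤ N := Nat.lt_succ_iff.mp a.isLt
  have h1 := P1 a.val hk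
  have h2 := P2 (N - a.val) a.val (by omega)
  have h3 := huv a
  rw [finIdx_of_fin a, finIdx_zero] at h1
  have hlast : finIdx N (a.val + (N - a.val)) = Fin.last N := by
    ext; simp [finIdx, Fin.last]; omega
  rw [hlast, finIdx_of_fin a] at h2
  rw [Finset.sum_add_distrib] at h1 h2
  -- sum identities
  have hD : (∑ i, d i) = ∑ j ∈ Finset.range (N + 1), d (finIdx N j) := by
    rw [← Fin.sum_univ_eq_sum_range (fun j => d (finIdx N j)) (N + 1)]
    exact Finset.sum_congr rfl fun i _ => by rw [finIdx_of_fin]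
  have hE : (∑ i, e i) = ∑ j ∈ Finset.range N, eb e j := by
    rw [← Fin.sum_univ_eq_sum_range (fun j => eb e j) N]
    exact Finset.sum_congr rfl fun i _ => by rw [eb_of_lt e i.isLt]
  have hsplitD : ∑ j ∈ Finset.range (N + 1), d (finIdx N j)
      = (∑ j ∈ Finset.range a.val, d (finIdx N j)) + d a
        + ∑ j ∈ Finset.range (N - a.val), d (finIdx N (a.val + j + 1)) := by
    have h := Finset.sum_range_add (fun j => d (finIdx N j)) (a.val + 1) (N - a.val)
    rw [show a.val + 1 + (N - a.val) = N + 1 by omega] at h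
    rw [h, Finset.sum_range_succ, finIdx_of_fin a]
    congr 1
    exact Finset.sum_congr rfl fun j _ => by rw [show a.val + 1 + j = a.val + j + 1 by omega]
  have hsplitE : ∑ j ∈ Finset.range N, eb e j
      = (∑ j ∈ Finset.range a.val, eb e j)
        + ∑ j ∈ Finset.range (N - a.val), eb e (a.val + j) := by
    have h := Finset.sum_range_add (fun j => eb e j) a.val (N - a.val)
    rw [show a.val + (N - a.val) = N by omega] at h
    exact h
  rw [abs_le] at h1 h2 h3 ht
  rw [abs_le]
  constructor <;> [nlinarith [hD, hE, hsplitD, hsplitE, h1.1, h1.2, h2.1, h2.2, h3.1, h3.2, ht.1, ht.2]; nlinarith [hD, hE, hsplitD, hsplitE, h1.1, h1.2, h2.1, h2.2, h3.1, h3.2, ht.1, ht.2]]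

lemma fin2_abs_sub_le (x : Fin 2) (f : Fin 2 → Fin 2 → ℝ) (hf : ∀ a b, 0 ≤ f a b) :
    |(∑ y, f x y) - (∑ x', f x' x)| ≤ f 0 1 + f 1 0 := by
  fin_cases x <;> rw [abs_le] <;> constructor <;>
    simp [Fin.sum_univ_two] <;> nlinarith [hf 0 0, hf 0 1, hf 1 0, hf 1 1]

lemma fin2_abs_closing_le (x : Fin 2) (f : Fin 2 → Fin 2 → ℝ) (hf : ∀ a b, 0 ≤ f a b) :
    |(∑ y, f x y) + (∑ x', f x' x) - (∑ x', ∑ y, f x' y)| ≤ f 0 0 + f 1 1 := by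
  fin_cases x <;> rw [abs_le] <;> constructor <;>
    simp [Fin.sum_univ_two] <;> nlinarith [hf 0 0, hf 0 1, hf 1 0, hf 1 1]

lemma abs_div_bound {S A B C : ℝ} (hS : 0 < S) (h : |A - B| ≤ C) :
    |A / S - B / S| ≤ C / S := by
  rw [div_sub_div_same, abs_div, abs_of_pos hS]
  exact div_le_div_of_nonneg_right h hS.le |>.trans_eq rfl

/-- For a non-signalling extension `P_{XYZ|ABC}` of a chained-Bell distribution,
the conditional distribution of `X` given `a, b, c, z` is close to uniform:
`|P_{X|abcz}(x) − 1/2| ≤ (1/2)·I_N(P_{XY|AB,cz})`. -/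
theorem nonsignalling_conditional_nearly_uniform
    {N : ℕ} {γ ζ : Type*} [Fintype γ] [Fintype ζ]
    (P : Fin (N + 1) → Fin (N + 1) → γ → Fin 2 → Fin 2 → ζ → ℝ)
    (hP0 : ∀ a b c x y z, 0 ≤ P a b c x y z)
    (hP1 : ∀ a b c, ∑ x, ∑ y, ∑ z, P a b c x y z = 1)
    -- non-signalling: P_{XY|ABC} = P_{XY|AB}
    (hNS1 : ∀ a b c c' x y, ∑ z, P a b c x y z = ∑ z, P a b c' x y z)
    -- non-signalling: P_{XZ|ABC} = P_{XZ|AC}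
    (hNS2 : ∀ a b b' c x z, ∑ y, P a b c x y z = ∑ y, P a b' c x y z)
    -- non-signalling: P_{YZ|ABC} = P_{YZ|BC}
    (hNS3 : ∀ a a' b c y z, ∑ x, P a b c x y z = ∑ x, P a' b c x y z) :
    ∀ (c : γ) (z : ζ), (∀ a b, 0 < ∑ x, ∑ y, P a b c x y z) →
      ∀ a b x,
        |(∑ y, P a b c x y z) / (∑ x', ∑ y, P a b c x' y z) - 1 / 2| ≤
          (1 / 2) *
            chainedBell (fun a' b' x' y' =>
              P a' b' c x' y' z / (∑ x'', ∑ y'', P a' b' c x'' y'' z)) := by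
  intro c z hpos a b x
  classical
  set S : ℝ := ∑ x', ∑ y, P 0 0 c x' y z with hSdef
  have hSc : ∀ a' b', (∑ x', ∑ y, P a' b' c x' y z) = S := by
    intro a' b'
    calc ∑ x', ∑ y, P a' b' c x' y z
        = ∑ x', ∑ y, P a' 0 c x' y z :=
          Finset.sum_congr rfl fun x' _ => hNS2 a' b' 0 c x' z
      _ = ∑ y, ∑ x', P a' 0 c x' y z := Finset.sum_comm
      _ = ∑ y, ∑ x', P 0 0 c x' y z :=
          Finset.sum_congr rfl fun y _ => hNS3 a' 0 0 c y z
      _ = S := Finset.sum_comm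
  have hSpos : 0 < S := hpos 0 0
  -- the marginal functions
  set u : Fin (N + 1) → ℝ := fun i => (∑ y, P i i c x y z) / S with hu
  set v : Fin (N + 1) → ℝ := fun i => (∑ x', P i i c x' x z) / S with hv
  set d : Fin (N + 1) → ℝ := fun i => P i i c 0 1 z / S + P i i c 1 0 z / S with hd
  set e : Fin N → ℝ := fun i =>
    P i.succ i.castSucc c 0 1 z / S + P i.succ i.castSucc c 1 0 z / S with he'
  set t : ℝ := P 0 (Fin.last N) c 0 0 z / S + P 0 (Fin.last N) c 1 1 z / S with htt
  have huv : ∀ i, |u i - v i| ≤ d i := by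
    intro i
    have := abs_div_bound (A := ∑ y, P i i c x y z) (B := ∑ x', P i i c x' x z) hSpos
      (fin2_abs_sub_le x (fun p q => P i i c p q z) (fun p q => hP0 i i c p q z))
    rw [hu, hv, hd]
    simpa [add_div] using this
  have hee : ∀ i : Fin N, |u i.succ - v i.castSucc| ≤ e i := by
    intro i
    have h1 : (∑ y, P i.succ i.succ c x y z) = ∑ y, P i.succ i.castSucc c x y z :=
      hNS2 i.succ i.succ i.castSucc c x z
    have h2 : (∑ x', P i.castSucc i.castSucc c x' x z) = ∑ x', P i.succ i.castSucc c x' x z :=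
      hNS3 i.castSucc i.succ i.castSucc c x z
    have := abs_div_bound (A := ∑ y, P i.succ i.castSucc c x y z)
      (B := ∑ x', P i.succ i.castSucc c x' x z) hSpos
      (fin2_abs_sub_le x (fun p q => P i.succ i.castSucc c p q z)
        (fun p q => hP0 i.succ i.castSucc c p q z))
    rw [hu, hv, he']
    simp only []
    rw [h1, h2]
    simpa [add_div] using this
  have hclose : |u 0 + v (Fin.last N) - 1| ≤ t := by
    have h1 : (∑ y, P 0 0 c x y z) = ∑ y, P 0 (Fin.last N) c x y z :=
      hNS2 0 0 (Fin.last N) c x z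
    have h2 : (∑ x', P (Fin.last N) (Fin.last N) c x' x z)
        = ∑ x', P 0 (Fin.last N) c x' x z :=
      hNS3 (Fin.last N) 0 (Fin.last N) c x z
    have h3 : (1 : ℝ) = (∑ x', ∑ y, P 0 (Fin.last N) c x' y z) / S := by
      rw [hSc 0 (Fin.last N), div_self hSpos.ne']
    have hnum := fin2_abs_closing_le x (fun p q => P 0 (Fin.last N) c p q z)
      (fun p q => hP0 0 (Fin.last N) c p q z)
    rw [hu, hv]
    simp only []
    rw [h1, h2, h3, htt]
    rw [← add_div, ← add_div, div_sub_div_same, abs_div, abs_of_pos hSpos]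
    exact div_le_div_of_nonneg_right hnum hSpos.le |>.trans_eq (by rw [add_div])
  have hmain := chain_bound u v d e t huv hee hclose a
  -- rewrite the goal
  have hq : (fun a' b' x' y' =>
        P a' b' c x' y' z / (∑ x'', ∑ y'', P a' b' c x'' y'' z))
      = fun a' b' x' y' => P a' b' c x' y' z / S := by
    funext a' b' x' y'; rw [hSc a' b']
  rw [hq]
  have hCB : chainedBell (fun a' b' x' y' => P a' b' c x' y' z / S)
      = t + ((∑ i, d i) + ∑ i, e i) := by
    rw [chainedBell, htt, hd, he']
    simp [Fin.sum_univ_two]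
    ring
  rw [hCB, hSc a b, hNS2 a b a c x z]
  exact hmain
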